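/- For a two-armed pure-exploration problem with fixed allocation fraction β ∈ (0,1) to the leader and optimal fraction β* ∈ (0,1), suppose the β-constrained characteristic value satisfies D_β(μ) ≥ max{β*/β, (1−β*)/(1−β)}^{-1}·D_{β*}(μ) for each player. Then for the multi-player problem with per-player fractions β_i and optima β_i*, the overall β̄-constrained value satisfies D_{β̄}(μ) ≥ (max_i max{β_i*/β_i, (1−β_i*)/(1−β_i)})^{-1}·D_{β̄*}(μ). In particular, taking β_i = 1/2 for all i, since β_i* ∈ (0,1) gives max{2β_i*, 2(1−β_i*)} ≤ 2, the 1/2-Top-Two allocation is 2-competitive: D_{1/2}(μ) ≥ D*(μ)/2. -/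

import Mathlib

/-- The max-min characteristic value: supremum over simplex weights `w` of the minimum over
players of `w i · D i`. -/
noncomputable def Dbar {n : ℕ} (D : Fin n → ℝ) : ℝ :=
  sSup {v : ℝ | ∃ w : Fin n → ℝ,
    (∀ i, 0 ≤ w i) ∧ (∑ i, w i = 1) ∧ v = ⨅ i, w i * D i}

/-- If each player's β-constrained value satisfies
`Dp i ≥ max{β*ᵢ/βᵢ, (1−β*ᵢ)/(1−βᵢ)}⁻¹ · Dstar i`, then the multi-player max-min value
satisfies `Dbar Dp ≥ (maxᵢ max{β*ᵢ/βᵢ, (1−β*ᵢ)/(1−βᵢ)})⁻¹ · Dbar Dstar`; in particular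
with `βᵢ = 1/2` for all `i`, the 1/2-Top-Two allocation is 2-competitive. -/
theorem stmt_15 {n : ℕ} [NeZero n] (β βstar Dp Dstar : Fin n → ℝ)
    (hβ : ∀ i, β i ∈ Set.Ioo (0 : ℝ) 1) (hβs : ∀ i, βstar i ∈ Set.Ioo (0 : ℝ) 1)
    (hDs : ∀ i, 0 ≤ Dstar i)
    (hyp : ∀ i, (max (βstar i / β i) ((1 - βstar i) / (1 - β i)))⁻¹ * Dstar i ≤ Dp i) :
    (⨆ i, max (βstar i / β i) ((1 - βstar i) / (1 - β i)))⁻¹ * Dbar Dstar ≤ Dbar Dp ∧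
    ((∀ i, β i = 1 / 2) → Dbar Dstar / 2 ≤ Dbar Dp) := by
  haveI hne : Nonempty (Fin n) := ⟨⟨0, Nat.pos_of_ne_zero (NeZero.ne n)⟩⟩
  set γ : Fin n → ℝ := fun i => max (βstar i / β i) ((1 - βstar i) / (1 - β i)) with hγdef
  have hγpos : ∀ i, 0 < γ i := fun i =>
    lt_max_of_lt_left (div_pos (hβs i).1 (hβ i).1)
  set Γ : ℝ := ⨆ i, γ i with hΓdef
  have hγΓ : ∀ i, γ i ≤ Γ := fun i => le_ciSup ((Set.finite_range γ).bddAbove) i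
  have hΓpos : 0 < Γ := lt_of_lt_of_le (hγpos (Classical.arbitrary _)) (hγΓ _)
  have hDp : ∀ i, 0 ≤ Dp i := fun i =>
    le_trans (mul_nonneg (inv_nonneg.2 (hγpos i).le) (hDs i)) (hyp i)
  have hDsγ : ∀ i, Dstar i ≤ γ i * Dp i := fun i => by
    have := hyp i
    rw [inv_mul_le_iff₀ (hγpos i)] at this
    exact this
  -- bounded above sets
  have bdd : ∀ D : Fin n → ℝ, (∀ i, 0 ≤ D i) →
      BddAbove {v : ℝ | ∃ w : Fin n → ℝ,
        (∀ i, 0 ≤ w i) ∧ (∑ i, w i = 1) ∧ v = ⨅ i, w i * D i} := by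
    intro D hD
    refine ⟨D (Classical.arbitrary _), ?_⟩
    rintro v ⟨w, hw0, hw1, rfl⟩
    refine le_trans (ciInf_le ((Set.finite_range _).bddBelow) (Classical.arbitrary _)) ?_
    have hw : w (Classical.arbitrary _) ≤ 1 := by
      rw [← hw1]
      exact Finset.single_le_sum (fun i _ => hw0 i) (Finset.mem_univ _)
    exact mul_le_of_le_one_left (hD _) hw
  -- nonempty sets
  have mem0 : ∀ D : Fin n → ℝ, (⨅ i, (fun j => if j = Classical.arbitrary (Fin n) then (1:ℝ) else 0) i * D i) ∈
      {v : ℝ | ∃ w : Fin n → ℝ,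
        (∀ i, 0 ≤ w i) ∧ (∑ i, w i = 1) ∧ v = ⨅ i, w i * D i} := by
    intro D
    refine ⟨_, fun i => ?_, ?_, rfl⟩
    · split <;> norm_num
    · simp
  -- nonneg infima
  have inf_nonneg : ∀ (D w : Fin n → ℝ), (∀ i, 0 ≤ D i) → (∀ i, 0 ≤ w i) →
      0 ≤ ⨅ i, w i * D i := fun D w hD hw =>
    le_ciInf fun i => mul_nonneg (hw i) (hD i)
  have hDbarP : 0 ≤ Dbar Dp := le_trans
    (inf_nonneg Dp _ hDp (fun i => by by_cases h : i = Classical.arbitrary (Fin n) <;> simp [h]))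
    (le_csSup (bdd Dp hDp) (mem0 Dp))
  -- key inequality
  have key : Dbar Dstar ≤ Γ * Dbar Dp := by
    refine csSup_le ⟨_, mem0 Dstar⟩ ?_
    rintro v ⟨w, hw0, hw1, rfl⟩
    obtain ⟨j, hj⟩ := exists_eq_ciInf_of_finite (f := fun i => w i * Dp i)
    have h1 : (⨅ i, w i * Dstar i) ≤ w j * Dstar j :=
      ciInf_le ((Set.finite_range _).bddBelow) j
    have h2 : w j * Dstar j ≤ Γ * (w j * Dp j) := by
      have := mul_le_mul_of_nonneg_left (hDsγ j) (hw0 j)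
      have h3 : γ j * (w j * Dp j) ≤ Γ * (w j * Dp j) :=
        mul_le_mul_of_nonneg_right (hγΓ j) (mul_nonneg (hw0 j) (hDp j))
      nlinarith
    have h4 : w j * Dp j ≤ Dbar Dp := by
      rw [hj]
      exact le_csSup (bdd Dp hDp) ⟨w, hw0, hw1, rfl⟩
    calc (⨅ i, w i * Dstar i) ≤ Γ * (w j * Dp j) := le_trans h1 h2
      _ ≤ Γ * Dbar Dp := mul_le_mul_of_nonneg_left h4 hΓpos.le
  constructor
  · rw [inv_mul_le_iff₀ hΓpos]; exact key
  · intro hhalf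
    have hΓ2 : Γ ≤ 2 := by
      refine ciSup_le fun i => ?_
      have h1 := (hβs i).1
      have h2 := (hβs i).2
      have hb := hhalf i
      simp only [hγdef, hb]
      refine max_le ?_ ?_
      · rw [div_le_iff₀ (by norm_num : (0:ℝ) < 1/2)]; linarith
      · rw [show (1:ℝ) - 1/2 = 1/2 by norm_num, div_le_iff₀ (by norm_num : (0:ℝ) < 1/2)]; linarith
    linarith [mul_le_mul_of_nonneg_right hΓ2 hDbarP]
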